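/- For n ≥ 2, Sp(n;2,3) = [0, 2^n] \ ({0} ∪ {2^d : 0 ≤ d ≤ n}); that is, a nonempty subset S of F_2^n fails to induce a 2-flat containing exactly 3 points of S if and only if S is an affine subspace of F_2^n, equivalently |S| ∈ Sp(n;2,3) exactly when |S| is nonzero and not a power of 2. -/

import Mathlib

def IsFlat (n k : ℕ) (H : Set (Fin n → ZMod 2)) : Prop :=
  ∃ (x : Fin n → ZMod 2) (W : Submodule (ZMod 2) (Fin n → ZMod 2)),
    Module.finrank (ZMod 2) W = k ∧ H = (fun w => x + w) '' (W : Set (Fin n → ZMod 2))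

def Forces (n k t m : ℕ) : Prop :=
  ∀ S : Set (Fin n → ZMod 2), S.ncard = m →
    ∃ H : Set (Fin n → ZMod 2), IsFlat n k H ∧ (H ∩ S).ncard = t

def Sp (n k t : ℕ) : Set ℕ := {m | m ≤ 2 ^ n ∧ Forces n k t m}

section Aux

variable {n : ℕ}

lemma aux_add_self (x : Fin n → ZMod 2) : x + x = 0 := by
  have h := two_smul (ZMod 2) x
  rw [show (2 : ZMod 2) = 0 by decide, zero_smul] at h
  exact h.symm

lemma aux_add_cancel {a b : Fin n → ZMod 2} (h : a + b = 0) : a = b := by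
  have := congrArg (· + b) h
  simpa [add_assoc, aux_add_self] using this

lemma aux_cancel3 {x y z : Fin n → ZMod 2} (h : x + (y + z) = x) : y = z := by
  apply aux_add_cancel
  have h' : x + (y + z) = x + 0 := by rw [add_zero, h]
  exact add_left_cancel h'

lemma aux_zmod2 : ∀ c : ZMod 2, c = 0 ∨ c = 1 := by decide

/-- closed under triple sums -/
def Closed {n : ℕ} (S : Set (Fin n → ZMod 2)) : Prop :=
  ∀ a ∈ S, ∀ b ∈ S, ∀ c ∈ S, a + b + c ∈ S

lemma flat_closed (x : Fin n → ZMod 2) (W : Submodule (ZMod 2) (Fin n → ZMod 2)) :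
    Closed ((fun w => x + w) '' (W : Set (Fin n → ZMod 2))) := by
  rintro _ ⟨w1, h1, rfl⟩ _ ⟨w2, h2, rfl⟩ _ ⟨w3, h3, rfl⟩
  refine ⟨w1 + w2 + w3, W.add_mem (W.add_mem h1 h2) h3, ?_⟩
  have e : x + w1 + (x + w2) + (x + w3) = (x + x) + (x + (w1 + w2 + w3)) := by abel
  rw [e, aux_add_self, zero_add]

lemma no3 {S : Set (Fin n → ZMod 2)} (hS : Closed S) {H : Set (Fin n → ZMod 2)}
    (hH : Closed H) : (H ∩ S).ncard ≠ 3 := by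
  intro h3
  obtain ⟨a, b, c, hab, hac, hbc, habc⟩ := Set.ncard_eq_three.mp h3
  have ha : a ∈ H ∩ S := habc ▸ (by simp)
  have hb : b ∈ H ∩ S := habc ▸ (by simp)
  have hc : c ∈ H ∩ S := habc ▸ (by simp)
  have hd : a + b + c ∈ H ∩ S := ⟨hH a ha.1 b hb.1 c hc.1, hS a ha.2 b hb.2 c hc.2⟩
  rw [habc] at hd
  rcases hd with h | h | h
  · exact hbc (aux_cancel3 (x := a) (by rw [← add_assoc]; exact h))
  · exact hac (aux_cancel3 (x := b) (by rw [show b + (a + c) = a + b + c by abel]; exact h))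
  · exact hab (aux_cancel3 (x := c) (by rw [show c + (a + b) = a + b + c by abel]; exact h))

lemma affine_of_closed {S : Set (Fin n → ZMod 2)} (hS : Closed S) (hne : S.Nonempty) :
    ∃ (x : Fin n → ZMod 2) (W : Submodule (ZMod 2) (Fin n → ZMod 2)),
      S = (fun w => x + w) '' (W : Set (Fin n → ZMod 2)) := by
  obtain ⟨x, hx⟩ := hne
  refine ⟨x, { carrier := {w | x + w ∈ S}
               zero_mem' := by simpa using hx
               add_mem' := ?_
               smul_mem' := ?_ }, ?_⟩
  · intro a b ha hb
    have h := hS _ ha _ hb _ hx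
    have e : x + a + (x + b) + x = x + (a + b) + (x + x) := by abel
    rw [e, aux_add_self, add_zero] at h
    exact h
  · intro c w hw
    rcases aux_zmod2 c with rfl | rfl
    · simpa using hx
    · simpa using hw
  · ext s
    constructor
    · intro hs
      refine ⟨x + s, show x + (x + s) ∈ S by
          rw [← add_assoc, aux_add_self, zero_add]; exact hs, ?_⟩
      show x + (x + s) = s
      rw [← add_assoc, aux_add_self, zero_add]
    · rintro ⟨w, hw, rfl⟩
      exact hw

lemma exists_flat3 {S : Set (Fin n → ZMod 2)} (h : ¬ Closed S) :
    ∃ H : Set (Fin n → ZMod 2), IsFlat n 2 H ∧ (H ∩ S).ncard = 3 := by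
  unfold Closed at h
  push_neg at h
  obtain ⟨a, ha, b, hb, c, hc, hd⟩ := h
  have hab : a ≠ b := by
    rintro rfl
    exact hd (by rwa [aux_add_self, zero_add])
  have hac : a ≠ c := by
    rintro rfl
    refine hd ?_
    rw [show a + b + a = b + (a + a) by abel, aux_add_self, add_zero]
    exact hb
  have hbc : b ≠ c := by
    rintro rfl
    refine hd ?_
    rw [show a + b + b = a + (b + b) by abel, aux_add_self, add_zero]
    exact ha
  have hu : a + b ≠ 0 := fun h0 => hab (aux_add_cancel h0)
  have hv : a + c ≠ 0 := fun h0 => hac (aux_add_cancel h0)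
  have huv : a + b ≠ a + c := fun h0 => hbc (add_left_cancel h0)
  have hli : LinearIndependent (ZMod 2) ![a + b, a + c] := by
    rw [LinearIndependent.pair_iff]
    intro s t hst
    rcases aux_zmod2 s with rfl | rfl <;> rcases aux_zmod2 t with rfl | rfl
    · exact ⟨rfl, rfl⟩
    · exact ((hv (by simpa using hst))).elim
    · exact ((hu (by simpa using hst))).elim
    · exact (huv (aux_add_cancel (by simpa using hst))).elim
  have hrange : Set.range ![a + b, a + c] = ({a + b, a + c} : Set (Fin n → ZMod 2)) := by
    ext z
    constructor
    · rintro ⟨i, rfl⟩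
      fin_cases i <;> simp
    · rintro (rfl | rfl)
      exacts [⟨0, rfl⟩, ⟨1, rfl⟩]
  have hrank : Module.finrank (ZMod 2)
      (Submodule.span (ZMod 2) ({a + b, a + c} : Set (Fin n → ZMod 2))) = 2 := by
    rw [← hrange, finrank_span_eq_card hli]
    simp
  have e1 : a + (a + b) = b := by
    rw [show a + (a + b) = (a + a) + b by abel, aux_add_self, zero_add]
  have e2 : a + (a + c) = c := by
    rw [show a + (a + c) = (a + a) + c by abel, aux_add_self, zero_add]
  have e3 : a + ((a + b) + (a + c)) = a + b + c := by
    rw [show a + ((a + b) + (a + c)) = (a + a) + (a + b + c) by abel, aux_add_self, zero_add]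
  have hH : (fun w => a + w) ''
      ((Submodule.span (ZMod 2) ({a + b, a + c} : Set (Fin n → ZMod 2))) :
        Set (Fin n → ZMod 2)) = {a, b, c, a + b + c} := by
    ext z
    simp only [Set.mem_image, SetLike.mem_coe, Submodule.mem_span_pair,
      Set.mem_insert_iff, Set.mem_singleton_iff]
    constructor
    · rintro ⟨w, ⟨s, t, rfl⟩, rfl⟩
      rcases aux_zmod2 s with rfl | rfl <;> rcases aux_zmod2 t with rfl | rfl
      · left; simp
      · right; right; left; simpa using e2
      · right; left; simpa using e1
      · right; right; right; simpa using e3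
    · rintro (hz | hz | hz | hz)
      · exact ⟨0, ⟨0, 0, by simp⟩, by simp [hz]⟩
      · exact ⟨a + b, ⟨1, 0, by simp⟩, by rw [hz]; exact e1⟩
      · exact ⟨a + c, ⟨0, 1, by simp⟩, by rw [hz]; exact e2⟩
      · exact ⟨(a + b) + (a + c), ⟨1, 1, by simp⟩, by rw [hz]; exact e3⟩
  refine ⟨_, ⟨a, _, hrank, rfl⟩, ?_⟩
  rw [hH]
  have hinter : ({a, b, c, a + b + c} : Set (Fin n → ZMod 2)) ∩ S = {a, b, c} := by
    ext z
    simp only [Set.mem_inter_iff, Set.mem_insert_iff, Set.mem_singleton_iff]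
    constructor
    · rintro ⟨(rfl | rfl | rfl | rfl), hz⟩
      · exact Or.inl rfl
      · exact Or.inr (Or.inl rfl)
      · exact Or.inr (Or.inr rfl)
      · exact (hd hz).elim
    · rintro (rfl | rfl | rfl)
      · exact ⟨Or.inl rfl, ha⟩
      · exact ⟨Or.inr (Or.inl rfl), hb⟩
      · exact ⟨Or.inr (Or.inr (Or.inl rfl)), hc⟩
  rw [hinter]
  exact Set.ncard_eq_three.mpr ⟨a, b, c, hab, hac, hbc, rfl⟩

lemma flat_ncard {k : ℕ} {H : Set (Fin n → ZMod 2)} (h : IsFlat n k H) :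
    H.ncard = 2 ^ k ∧ k ≤ n := by
  obtain ⟨x, W, hk, rfl⟩ := h
  have hinj : Function.Injective (fun w : Fin n → ZMod 2 => x + w) :=
    fun a b h => by simpa using h
  constructor
  · rw [Set.ncard_image_of_injective _ hinj, ← Nat.card_coe_set_eq]
    letI : Fintype W := Fintype.ofFinite _
    rw [show Nat.card ((W : Set (Fin n → ZMod 2))) = Nat.card W from rfl,
      Nat.card_eq_fintype_card, Module.card_eq_pow_finrank (K := ZMod 2), ZMod.card, hk]
  · rw [← hk]
    calc Module.finrank (ZMod 2) W ≤ Module.finrank (ZMod 2) (Fin n → ZMod 2) :=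
          Submodule.finrank_le W
      _ = n := by rw [Module.finrank_pi]; simp

lemma exists_subspace (d : ℕ) (hd : d ≤ n) :
    ∃ W : Submodule (ZMod 2) (Fin n → ZMod 2), Module.finrank (ZMod 2) W = d := by
  have hli : LinearIndependent (ZMod 2)
      (fun i : Fin d => Pi.basisFun (ZMod 2) (Fin n) (Fin.castLE hd i)) :=
    (Pi.basisFun (ZMod 2) (Fin n)).linearIndependent.comp _ (Fin.castLE_injective hd)
  exact ⟨Submodule.span (ZMod 2) (Set.range _), by rw [finrank_span_eq_card hli]; simp⟩

end Aux

theorem stmt_3 (n : ℕ) (hn : 2 ≤ n) :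
    Sp n 2 3 = Set.Icc 0 (2 ^ n) \ ({0} ∪ {x | ∃ d ≤ n, x = 2 ^ d}) ∧
    (∀ S : Set (Fin n → ZMod 2), S.Nonempty →
      ((¬ ∃ H : Set (Fin n → ZMod 2), IsFlat n 2 H ∧ (H ∩ S).ncard = 3) ↔
        ∃ (x : Fin n → ZMod 2) (W : Submodule (ZMod 2) (Fin n → ZMod 2)),
          S = (fun w => x + w) '' (W : Set (Fin n → ZMod 2)))) := by
  constructor
  · ext m
    simp only [Sp, Set.mem_setOf_eq, Set.mem_diff, Set.mem_Icc, Set.mem_union,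
      Set.mem_singleton_iff]
    constructor
    · rintro ⟨hm, hf⟩
      refine ⟨⟨Nat.zero_le m, hm⟩, ?_⟩
      rintro (rfl | ⟨d, hd, rfl⟩)
      · obtain ⟨H, hH, h3⟩ := hf ∅ (by simp)
        simp at h3
      · obtain ⟨W, hW⟩ := exists_subspace d hd
        obtain ⟨H, hH, h3⟩ := hf ((fun w => (0 : Fin n → ZMod 2) + w) '' W)
          ((flat_ncard ⟨0, W, hW, rfl⟩).1)
        obtain ⟨x, W', hW', rfl⟩ := hH
        exact no3 (flat_closed 0 W) (flat_closed x W') h3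
    · rintro ⟨⟨-, hm⟩, hnot⟩
      push_neg at hnot
      obtain ⟨h0, hpow⟩ := hnot
      refine ⟨hm, fun S hScard => ?_⟩
      by_contra hno
      have hcl : Closed S := by
        by_contra hncl
        exact hno (exists_flat3 hncl)
      have hne : S.Nonempty := Set.nonempty_of_ncard_ne_zero (by rw [hScard]; exact h0)
      obtain ⟨x, W, hSW⟩ := affine_of_closed hcl hne
      have hcard := flat_ncard (k := Module.finrank (ZMod 2) W) ⟨x, W, rfl, hSW⟩
      exact hpow _ hcard.2 (hScard.symm.trans hcard.1)
  · intro S hne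
    constructor
    · intro hno
      have hcl : Closed S := by
        by_contra h
        exact hno (exists_flat3 h)
      exact affine_of_closed hcl hne
    · rintro ⟨x, W, rfl⟩ ⟨H, ⟨y, W', -, rfl⟩, h3⟩
      exact no3 (flat_closed x W) (flat_closed y W') h3
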